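/- Let F be a Drinfel'd twist on a bialgebra H over a commutative ring R. Then the twisted coproduct Δ_F : H → H ⊗ H, Δ_F(x) := F · Δ(x) · F⁻¹, is an R-algebra homomorphism (Δ_F(x·y) = Δ_F(x) · Δ_F(y)) and is coassociative: (Δ_F ⊗ id) ∘ Δ_F = (id ⊗ Δ_F) ∘ Δ_F. -/

import Mathlib

open scoped TensorProduct

noncomputable section

/-- `Δ ⊗ id` as an algebra homomorphism `H ⊗ H → (H ⊗ H) ⊗ H`. -/
def comulTensorId (R H : Type*) [CommRing R] [Ring H] [Bialgebra R H] :
    (H ⊗[R] H) →ₐ[R] (H ⊗[R] H) ⊗[R] H :=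
  Algebra.TensorProduct.map (Bialgebra.comulAlgHom R H) (AlgHom.id R H)

/-- `id ⊗ Δ` as an algebra homomorphism `H ⊗ H → H ⊗ (H ⊗ H)`. -/
def idTensorComul (R H : Type*) [CommRing R] [Ring H] [Bialgebra R H] :
    (H ⊗[R] H) →ₐ[R] H ⊗[R] (H ⊗[R] H) :=
  Algebra.TensorProduct.map (AlgHom.id R H) (Bialgebra.comulAlgHom R H)

/-- `F` is a Drinfel'd twist on the bialgebra `H` with two-sided inverse `Finv`:
it is invertible and satisfies the 2-cocycle condition
`(F ⊗ 1) · (Δ ⊗ id)(F) = (1 ⊗ F) · (id ⊗ Δ)(F)` in `H ⊗ H ⊗ H`. -/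
def IsDrinfeldTwist (R : Type*) {H : Type*} [CommRing R] [Ring H] [Bialgebra R H]
    (F Finv : H ⊗[R] H) : Prop :=
  F * Finv = 1 ∧ Finv * F = 1 ∧
    (TensorProduct.assoc R H H H) ((F ⊗ₜ[R] (1 : H)) * comulTensorId R H F) =
      ((1 : H) ⊗ₜ[R] F) * idTensorComul R H F

section Aux

variable {R H : Type*} [CommRing R] [Ring H] [Bialgebra R H]

/-- Conjugation by an invertible element, as an algebra homomorphism precomposed with φ. -/
def conjAlgHom (F Finv : H ⊗[R] H) (h1 : F * Finv = 1) (h2 : Finv * F = 1) :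
    H →ₐ[R] H ⊗[R] H where
  toFun x := F * Coalgebra.comul (R := R) x * Finv
  map_one' := by simp [Bialgebra.comul_one, h1]
  map_mul' x y := by
    have := Bialgebra.comul_mul (R := R) x y
    simp only [this]
    have : Coalgebra.comul (R := R) x * Coalgebra.comul (R := R) y
        = Coalgebra.comul (R := R) x * (Finv * F) * Coalgebra.comul (R := R) y := by
      rw [h2, mul_one]
    rw [this]; simp only [mul_assoc]
  map_zero' := by simp
  map_add' x y := by simp [map_add, mul_add, add_mul]
  commutes' r := by
    show F * Coalgebra.comul (R := R) (algebraMap R H r) * Finv = algebraMap R (H ⊗[R] H) r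
    have hc : Coalgebra.comul (R := R) (algebraMap R H r)
        = algebraMap R (H ⊗[R] H) r := by
      simp [Algebra.algebraMap_eq_smul_one, map_smul, Bialgebra.comul_one]
    rw [hc, ← Algebra.commutes r F, mul_assoc, h1, mul_one]

@[simp] lemma conjAlgHom_apply (F Finv : H ⊗[R] H) (h1 : F * Finv = 1) (h2 : Finv * F = 1)
    (x : H) : conjAlgHom F Finv h1 h2 x = F * Coalgebra.comul (R := R) x * Finv := rfl

end Aux

set_option maxHeartbeats 1000000 in
/-- The twisted coproduct `Δ_F(x) := F · Δ(x) · F⁻¹` of a Drinfel'd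
twist `F` on a bialgebra `H` is an `R`-algebra homomorphism and is coassociative:
`(Δ_F ⊗ id) ∘ Δ_F = (id ⊗ Δ_F) ∘ Δ_F`. -/
theorem twisted_coproduct_isAlgHom_and_coassociative
    (R : Type*) [CommRing R] (H : Type*) [Ring H] [Bialgebra R H]
    (F Finv : H ⊗[R] H) (hF : IsDrinfeldTwist R F Finv) :
    ∃ φ : H →ₐ[R] H ⊗[R] H,
      (∀ x : H, φ x = F * Coalgebra.comul (R := R) x * Finv) ∧
      ∀ x : H,
        (TensorProduct.assoc R H H H)
            ((Algebra.TensorProduct.map φ (AlgHom.id R H)) (φ x)) =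
          (Algebra.TensorProduct.map (AlgHom.id R H) φ) (φ x) := by
  obtain ⟨h1, h2, hcoc⟩ := hF
  refine ⟨conjAlgHom F Finv h1 h2, fun x => rfl, fun x => ?_⟩
  set φ := conjAlgHom F Finv h1 h2 with hφ
  -- key: (map φ id) z = (F ⊗ₜ 1) * comulTensorId z * (Finv ⊗ₜ 1)
  have key1 : ∀ z : H ⊗[R] H,
      Algebra.TensorProduct.map φ (AlgHom.id R H) z
        = (F ⊗ₜ[R] (1 : H)) * comulTensorId R H z * (Finv ⊗ₜ[R] (1 : H)) := by
    intro z
    induction z using TensorProduct.induction_on with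
    | zero => simp
    | tmul a b =>
        simp only [Algebra.TensorProduct.map_tmul, AlgHom.coe_id, id_eq,
          comulTensorId, Bialgebra.comulAlgHom_apply, hφ, conjAlgHom_apply,
          Algebra.TensorProduct.tmul_mul_tmul, one_mul, mul_one]
    | add u v hu hv => simp [map_add, hu, hv, mul_add, add_mul]
  have key2 : ∀ z : H ⊗[R] H,
      Algebra.TensorProduct.map (AlgHom.id R H) φ z
        = ((1 : H) ⊗ₜ[R] F) * idTensorComul R H z * ((1 : H) ⊗ₜ[R] Finv) := by
    intro z
    induction z using TensorProduct.induction_on with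
    | zero => simp
    | tmul a b =>
        simp only [Algebra.TensorProduct.map_tmul, AlgHom.coe_id, id_eq,
          idTensorComul, Bialgebra.comulAlgHom_apply, hφ, conjAlgHom_apply,
          Algebra.TensorProduct.tmul_mul_tmul, one_mul, mul_one]
    | add u v hu hv => simp [map_add, hu, hv, mul_add, add_mul]
  rw [key1, key2]
  have hφx : φ x = F * Coalgebra.comul (R := R) x * Finv := rfl
  rw [hφx]
  -- abbreviations
  set A : (H ⊗[R] H) ⊗[R] H := (F ⊗ₜ[R] (1 : H)) * comulTensorId R H F with hA
  set B : (H ⊗[R] H) ⊗[R] H := comulTensorId R H Finv * (Finv ⊗ₜ[R] (1 : H)) with hB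
  set A' : H ⊗[R] (H ⊗[R] H) := ((1 : H) ⊗ₜ[R] F) * idTensorComul R H F with hA'
  set B' : H ⊗[R] (H ⊗[R] H) := idTensorComul R H Finv * ((1 : H) ⊗ₜ[R] Finv) with hB'
  have hCinv : comulTensorId R H F * comulTensorId R H Finv = 1 := by
    rw [← map_mul, h1, map_one]
  have hCinv' : comulTensorId R H Finv * comulTensorId R H F = 1 := by
    rw [← map_mul, h2, map_one]
  have hDinv : idTensorComul R H F * idTensorComul R H Finv = 1 := by
    rw [← map_mul, h1, map_one]
  have hDinv' : idTensorComul R H Finv * idTensorComul R H F = 1 := by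
    rw [← map_mul, h2, map_one]
  have hF1 : (F ⊗ₜ[R] (1 : H)) * (Finv ⊗ₜ[R] (1 : H)) = 1 := by
    rw [Algebra.TensorProduct.tmul_mul_tmul, h1, mul_one]
    rfl
  have hF1' : (Finv ⊗ₜ[R] (1 : H)) * (F ⊗ₜ[R] (1 : H)) = 1 := by
    rw [Algebra.TensorProduct.tmul_mul_tmul, h2, mul_one]
    rfl
  have h1F : ((1 : H) ⊗ₜ[R] F) * ((1 : H) ⊗ₜ[R] Finv) = 1 := by
    rw [Algebra.TensorProduct.tmul_mul_tmul, h1, mul_one]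
    rfl
  have h1F' : ((1 : H) ⊗ₜ[R] Finv) * ((1 : H) ⊗ₜ[R] F) = 1 := by
    rw [Algebra.TensorProduct.tmul_mul_tmul, h2, mul_one]
    rfl
  have hAB : A * B = 1 := by
    rw [hA, hB, mul_assoc, ← mul_assoc (comulTensorId R H F), hCinv, one_mul, hF1]
  have hBA : B * A = 1 := by
    rw [hA, hB, mul_assoc, ← mul_assoc (Finv ⊗ₜ[R] (1 : H)), hF1', one_mul, hCinv']
  have hA'B' : A' * B' = 1 := by
    rw [hA', hB', mul_assoc, ← mul_assoc (idTensorComul R H F), hDinv, one_mul, h1F]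
  -- assoc as algebra equivalence
  have hassoc : ∀ z : (H ⊗[R] H) ⊗[R] H,
      (TensorProduct.assoc R H H H) z = (Algebra.TensorProduct.assoc R R R H H H) z :=
    fun z => rfl
  have hassocA : (Algebra.TensorProduct.assoc R R R H H H) A = A' := by
    rw [← hassoc]; exact hcoc
  have hassocB : (Algebra.TensorProduct.assoc R R R H H H) B = B' := by
    have hmulBA : (Algebra.TensorProduct.assoc R R R H H H) B * A' = 1 := by
      rw [← hassocA, ← map_mul, hBA, map_one]
    exact left_inv_eq_right_inv hmulBA hA'B'
  -- middle term: coassociativity of comul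
  have hmid : (Algebra.TensorProduct.assoc R R R H H H)
      (comulTensorId R H (Coalgebra.comul (R := R) x))
        = idTensorComul R H (Coalgebra.comul (R := R) x) := by
    have h1' : comulTensorId R H (Coalgebra.comul (R := R) x)
        = LinearMap.rTensor H (Coalgebra.comul (R := R)) (Coalgebra.comul (R := R) x) := by
      induction (Coalgebra.comul (R := R) x) using TensorProduct.induction_on with
      | zero => simp
      | tmul a b => simp [comulTensorId]
      | add u v hu hv => simp [map_add, hu, hv]
    have h2' : idTensorComul R H (Coalgebra.comul (R := R) x)
        = LinearMap.lTensor H (Coalgebra.comul (R := R)) (Coalgebra.comul (R := R) x) := by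
      induction (Coalgebra.comul (R := R) x) using TensorProduct.induction_on with
      | zero => simp
      | tmul a b => simp [idTensorComul]
      | add u v hu hv => simp [map_add, hu, hv]
    rw [h1', h2', ← hassoc]
    exact Coalgebra.coassoc_apply x
  -- put everything together
  have expand : (F ⊗ₜ[R] (1 : H)) * comulTensorId R H (F * Coalgebra.comul (R := R) x * Finv)
      * (Finv ⊗ₜ[R] (1 : H))
      = A * comulTensorId R H (Coalgebra.comul (R := R) x) * B := by
    rw [map_mul, map_mul, hA, hB]; simp only [mul_assoc]
  have expand' : ((1 : H) ⊗ₜ[R] F) * idTensorComul R H (F * Coalgebra.comul (R := R) x * Finv)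
      * ((1 : H) ⊗ₜ[R] Finv)
      = A' * idTensorComul R H (Coalgebra.comul (R := R) x) * B' := by
    rw [map_mul, map_mul, hA', hB']; simp only [mul_assoc]
  rw [expand, expand', hassoc, map_mul, map_mul, hassocA, hassocB, hmid]
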